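/- Let 0 < F < 2, let ν > (1+√(1+4F))/(2F) with ν > 1, and set H_R := 1/ν², Q_R := H_R^{3/2}, c := (1 − H_R^{3/2})/(1 − H_R). Define the constant matrices A₊ := [[−c, 1],[H_R/F² − Q_R²/H_R², 2Q_R/H_R − c]] and E₊ := [[0, 0],[2Q_R²/H_R³ + 1, −2Q_R/H_R²]]. Then for every λ ∈ ℂ with Re λ > 0 and every γ ∈ ℂ with det(E₊ − λ·Id − γ·A₊) = 0, one has Re γ > 0. -/

import Mathlib

open Real Matrix

/-- Wave speed `c := (1 − H_R^{3/2})/(1 − H_R)`. -/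
noncomputable def speed (HR : ℝ) : ℝ := (1 - HR ^ ((3 : ℝ) / 2)) / (1 - HR)

/-- `Q_R := H_R^{3/2}`. -/
noncomputable def QR (HR : ℝ) : ℝ := HR ^ ((3 : ℝ) / 2)

/-- Limiting coefficient matrix `A₊` at the right state `(H_R, Q_R)`. -/
noncomputable def Aplus (F HR : ℝ) : Matrix (Fin 2) (Fin 2) ℝ :=
  !![-(speed HR), 1;
     HR / F ^ 2 - QR HR ^ 2 / HR ^ 2, 2 * QR HR / HR - speed HR]

/-- Limiting coefficient matrix `E₊` at the right state `(H_R, Q_R)`. -/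
noncomputable def Eplus (HR : ℝ) : Matrix (Fin 2) (Fin 2) ℝ :=
  !![0, 0;
     2 * QR HR ^ 2 / HR ^ 3 + 1, -(2 * QR HR) / HR ^ 2]

/-- Value of a negative definite quadratic form is negative. -/
lemma negdef_val (b11 b12 b22 x1 x2 t : ℝ) (h11 : b11 < 0)
    (hdet : b12 ^ 2 < b11 * b22) (hx1 : 0 ≤ x1) (hx2 : 0 ≤ x2)
    (hx : 0 < x1 ∨ 0 < x2) (ht : t ^ 2 ≤ x1 * x2) :
    b11 * x1 + 2 * b12 * t + b22 * x2 < 0 := by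
  have h22 : b22 < 0 := by nlinarith [sq_nonneg b12]
  by_contra hcon
  push_neg at hcon
  have hm : 0 < -(b11 * x1) - b22 * x2 := by
    rcases hx with h | h
    · nlinarith
    · nlinarith
  have h2 : (b11 * x1 + b22 * x2) ^ 2 ≤ (2 * b12 * t) ^ 2 := by nlinarith
  have h3 : 4 * (b11 * b22) * (x1 * x2) ≤ (b11 * x1 + b22 * x2) ^ 2 := by
    nlinarith [sq_nonneg (b11 * x1 - b22 * x2)]
  have h4 : (2 * b12 * t) ^ 2 ≤ 4 * b12 ^ 2 * (x1 * x2) := by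
    nlinarith [sq_nonneg b12, ht]
  have hx1x2 : x1 * x2 ≤ 0 := by nlinarith
  have hxx : x1 * x2 = 0 := le_antisymm hx1x2 (mul_nonneg hx1 hx2)
  have ht0 : t = 0 := by nlinarith [sq_nonneg t]
  rcases hx with h | h
  · have hx20 : x2 = 0 := by
      rcases mul_eq_zero.1 hxx with h' | h'
      · exact absurd h' (ne_of_gt h)
      · exact h'
    nlinarith
  · have hx10 : x1 = 0 := by
      rcases mul_eq_zero.1 hxx with h' | h'
      · exact h'
      · exact absurd h' (ne_of_gt h)
    nlinarith

set_option maxHeartbeats 1000000 in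
/-- Equation (4.2)(ii): in the discontinuous-profile regime
`ν > (1+√(1+4F))/(2F)`, both spatial roots `γ` of
`det(E₊ − λ·Id − γA₊) = 0` have positive real part whenever `Re λ > 0`. -/
theorem right_state_rates_pos (F nu : ℝ) (hF0 : 0 < F) (hF2 : F < 2)
    (hnu1 : 1 < nu) (hnu : nu > (1 + Real.sqrt (1 + 4 * F)) / (2 * F)) :
    ∀ lam : ℂ, 0 < lam.re → ∀ gam : ℂ,
      (((Eplus (1 / nu ^ 2)).map (Complex.ofReal))
        - lam • (1 : Matrix (Fin 2) (Fin 2) ℂ)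
        - gam • ((Aplus F (1 / nu ^ 2)).map (Complex.ofReal))).det = 0 →
      0 < gam.re := by
  intro lam hlam gam hdet
  have h0 : (0 : ℝ) < nu := lt_trans one_pos hnu1
  have hnu0 : nu ≠ 0 := ne_of_gt h0
  have hF0' : F ≠ 0 := ne_of_gt hF0
  -- the discontinuous-profile condition
  have hFnu : nu + 1 < F * nu ^ 2 := by
    have hs2 : Real.sqrt (1 + 4 * F) ^ 2 = 1 + 4 * F := Real.sq_sqrt (by linarith)
    have hsn : 0 ≤ Real.sqrt (1 + 4 * F) := Real.sqrt_nonneg _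
    have h2F : (0 : ℝ) < 2 * F := by linarith
    have h1 : 1 + Real.sqrt (1 + 4 * F) < nu * (2 * F) := (div_lt_iff₀ h2F).1 hnu
    nlinarith [hs2, hsn, h1]
  -- compute determinant into scalar form
  simp [Matrix.det_fin_two, Eplus, Aplus, Matrix.one_apply] at hdet
  obtain ⟨q, hq⟩ : ∃ x : ℝ, x = QR (nu ^ 2)⁻¹ := ⟨_, rfl⟩
  obtain ⟨s, hs⟩ : ∃ x : ℝ, x = speed (nu ^ 2)⁻¹ := ⟨_, rfl⟩
  rw [← hq, ← hs] at hdet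
  -- values of q and s
  have hQval : q = (nu ^ 3)⁻¹ := by
    rw [hq, QR]
    have h1 : (0 : ℝ) ≤ nu⁻¹ := by positivity
    rw [show ((nu ^ 2)⁻¹ : ℝ) = (nu⁻¹) ^ ((2 : ℕ) : ℝ) by
      rw [Real.rpow_natCast]; rw [inv_pow]]
    rw [← Real.rpow_mul h1]
    norm_num
  have hcs : s = (nu ^ 2 + nu + 1) / (nu ^ 2 + nu) := by
    rw [hs, speed]
    have hQ' : ((nu ^ 2)⁻¹ : ℝ) ^ ((3 : ℝ) / 2) = (nu ^ 3)⁻¹ := by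
      rw [← QR, ← hq]; exact hQval
    have h3 : (1 : ℝ) - (nu ^ 2)⁻¹ ≠ 0 := by
      have : (nu ^ 2)⁻¹ < 1 := by
        rw [inv_lt_one_iff₀]; right; nlinarith
      linarith
    have h4 : nu ^ 2 + nu ≠ 0 := by positivity
    rw [hQ', div_eq_div_iff h3 h4]
    field_simp
    ring
  obtain ⟨kR, hkR⟩ : ∃ x : ℝ, x = (1 / F ^ 2 - 1) / nu ^ 2 := ⟨_, rfl⟩
  -- coerced entry simplifications
  have r1 : 2 * q ^ 2 * (nu ^ 2) ^ 3 + 1 = 3 := by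
    rw [hQval]; field_simp; ring
  have r2 : (nu ^ 2)⁻¹ / F ^ 2 - q ^ 2 * (nu ^ 2) ^ 2 = kR := by
    rw [hQval, hkR]; field_simp
  have r3 : 2 * q * (nu ^ 2) ^ 2 = 2 * nu := by
    rw [hQval]; field_simp
  have r4 : 2 * q * nu ^ 2 = 2 / nu := by
    rw [hQval]; field_simp
  have ce1 : 2 * (q : ℂ) ^ 2 * ((nu : ℂ) ^ 2) ^ 3 + 1 = 3 := by exact_mod_cast congrArg Complex.ofReal r1
  have ce2 : ((nu : ℂ) ^ 2)⁻¹ / (F : ℂ) ^ 2 - (q : ℂ) ^ 2 * ((nu : ℂ) ^ 2) ^ 2 = (kR : ℂ) := by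
    exact_mod_cast congrArg Complex.ofReal r2
  have ce3 : 2 * (q : ℂ) * ((nu : ℂ) ^ 2) ^ 2 = 2 * (nu : ℂ) := by
    exact_mod_cast congrArg Complex.ofReal r3
  have ce4 : 2 * (q : ℂ) * (nu : ℂ) ^ 2 = 2 / (nu : ℂ) := by
    exact_mod_cast congrArg Complex.ofReal r4
  -- kernel vector
  obtain ⟨v1, hv1⟩ : ∃ x : ℂ, x = -gam := ⟨_, rfl⟩
  obtain ⟨v2, hv2⟩ : ∃ x : ℂ, x = lam - gam * (s : ℂ) := ⟨_, rfl⟩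
  have hE1 : (gam * (s : ℂ) - lam) * v1 + (-gam) * v2 = 0 := by
    rw [hv1, hv2]; ring
  have hE2 : ((3 : ℂ) - gam * (kR : ℂ)) * v1
      + (-(2 * (nu : ℂ)) - lam - gam * (2 / (nu : ℂ) - (s : ℂ))) * v2 = 0 := by
    rw [hv1, hv2]
    linear_combination (-1 : ℂ) * hdet + gam * ce1 - gam ^ 2 * ce2
      - (gam * (s : ℂ) - lam) * ce3 - (gam * (s : ℂ) - lam) * gam * ce4
  -- energy identity with symmetrizer S = [[6/nu + 2 nu kR, -3],[-3, 2 nu]]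
  have hkey :
      ((6 / (nu : ℂ) + 2 * (nu : ℂ) * (kR : ℂ)) * (starRingEnd ℂ) v1 + (-3) * (starRingEnd ℂ) v2)
          * ((gam * (s : ℂ) - lam) * v1 + (-gam) * v2)
        + ((-3) * (starRingEnd ℂ) v1 + 2 * (nu : ℂ) * (starRingEnd ℂ) v2)
          * (((3 : ℂ) - gam * (kR : ℂ)) * v1
              + (-(2 * (nu : ℂ)) - lam - gam * (2 / (nu : ℂ) - (s : ℂ))) * v2)
      = -((3 * (starRingEnd ℂ) v1 - 2 * (nu : ℂ) * (starRingEnd ℂ) v2) * (3 * v1 - 2 * (nu : ℂ) * v2))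
        - lam * ((6 / (nu : ℂ) + 2 * (nu : ℂ) * (kR : ℂ)) * ((starRingEnd ℂ) v1 * v1)
            + (-3) * ((starRingEnd ℂ) v1 * v2 + (starRingEnd ℂ) v2 * v1)
            + 2 * (nu : ℂ) * ((starRingEnd ℂ) v2 * v2))
        - gam * ((-( (6 / (nu : ℂ) + 2 * (nu : ℂ) * (kR : ℂ)) * (s : ℂ)) - 3 * (kR : ℂ)) * ((starRingEnd ℂ) v1 * v1)
            + (3 * (s : ℂ) + 2 * (nu : ℂ) * (kR : ℂ)) * ((starRingEnd ℂ) v1 * v2 + (starRingEnd ℂ) v2 * v1)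
            + (-3 + 2 * (nu : ℂ) * (2 / (nu : ℂ) - (s : ℂ))) * ((starRingEnd ℂ) v2 * v2)) := by
    ring
  rw [hE1, hE2] at hkey
  simp only [mul_zero, add_zero, zero_add] at hkey
  -- conjugation computations
  have hcc1 : (starRingEnd ℂ) v1 * v1 = ((Complex.normSq v1 : ℝ) : ℂ) := by
    rw [mul_comm, Complex.mul_conj]
  have hcc2 : (starRingEnd ℂ) v2 * v2 = ((Complex.normSq v2 : ℝ) : ℂ) := by
    rw [mul_comm, Complex.mul_conj]
  have hcc3 : (starRingEnd ℂ) v1 * v2 + (starRingEnd ℂ) v2 * v1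
      = ((2 * ((starRingEnd ℂ) v1 * v2).re : ℝ) : ℂ) := by
    have h' : (starRingEnd ℂ) v2 * v1 = (starRingEnd ℂ) ((starRingEnd ℂ) v1 * v2) := by
      rw [_root_.map_mul, Complex.conj_conj]; ring
    rw [h', Complex.add_conj]
  have hcc4 : (3 * (starRingEnd ℂ) v1 - 2 * (nu : ℂ) * (starRingEnd ℂ) v2) * (3 * v1 - 2 * (nu : ℂ) * v2)
      = ((Complex.normSq (3 * v1 - 2 * (nu : ℂ) * v2) : ℝ) : ℂ) := by
    have h' : 3 * (starRingEnd ℂ) v1 - 2 * (nu : ℂ) * (starRingEnd ℂ) v2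
        = (starRingEnd ℂ) (3 * v1 - 2 * (nu : ℂ) * v2) := by
      simp [map_sub, _root_.map_mul, Complex.conj_ofReal, map_ofNat]
    rw [h', mul_comm, Complex.mul_conj]
  obtain ⟨x1, hx1def⟩ : ∃ x : ℝ, x = Complex.normSq v1 := ⟨_, rfl⟩
  obtain ⟨x2, hx2def⟩ : ∃ x : ℝ, x = Complex.normSq v2 := ⟨_, rfl⟩
  obtain ⟨tt, httdef⟩ : ∃ x : ℝ, x = ((starRingEnd ℂ) v1 * v2).re := ⟨_, rfl⟩
  obtain ⟨nw, hnwdef⟩ : ∃ x : ℝ, x = Complex.normSq (3 * v1 - 2 * (nu : ℂ) * v2) := ⟨_, rfl⟩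
  rw [← hx1def] at hcc1
  rw [← hx2def] at hcc2
  rw [← httdef] at hcc3
  rw [← hnwdef] at hcc4
  rw [hcc1, hcc2, hcc3, hcc4] at hkey
  -- final scalar identity
  have hfin : lam * (((6 / nu + 2 * nu * kR) * x1 - 6 * tt + 2 * nu * x2 : ℝ) : ℂ)
      + gam * (((-((6 / nu + 2 * nu * kR) * s) - 3 * kR) * x1 + 2 * (3 * s + 2 * nu * kR) * tt
          + (-3 + 2 * nu * (2 / nu - s)) * x2 : ℝ) : ℂ)
      = -((nw : ℝ) : ℂ) := by
    push_cast at hkey ⊢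
    linear_combination hkey
  have hre := congrArg Complex.re hfin
  simp only [Complex.add_re, Complex.mul_re, Complex.ofReal_re, Complex.ofReal_im,
    Complex.neg_re, mul_zero, sub_zero] at hre
  clear hdet hkey hE1 hE2 hcc1 hcc2 hcc3 hcc4 ce1 ce2 ce3 ce4 hfin r1 r2 r3 r4 hq hQval
  -- positivity facts
  have hx1n : 0 ≤ x1 := hx1def ▸ Complex.normSq_nonneg _
  have hx2n : 0 ≤ x2 := hx2def ▸ Complex.normSq_nonneg _
  have hnwn : 0 ≤ nw := hnwdef ▸ Complex.normSq_nonneg _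
  have hx : 0 < x1 ∨ 0 < x2 := by
    by_cases hg : gam = 0
    · right
      rw [hx2def, hv2, hg]
      simp only [zero_mul, sub_zero]
      exact Complex.normSq_pos.2 (fun h => by rw [h] at hlam; simp at hlam)
    · left
      rw [hx1def, hv1]
      exact Complex.normSq_pos.2 (neg_ne_zero.2 hg)
  have htt : tt ^ 2 ≤ x1 * x2 := by
    have h1 : tt ^ 2 ≤ Complex.normSq ((starRingEnd ℂ) v1 * v2) := by
      rw [Complex.normSq_apply, httdef]
      nlinarith [sq_nonneg (((starRingEnd ℂ) v1 * v2).im)]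
    rwa [Complex.normSq_mul, Complex.normSq_conj, ← hx1def, ← hx2def] at h1
  -- numeric coefficient facts
  have hP : (0 : ℝ) < 6 / nu + 2 * nu * kR := by
    have e : 6 / nu + 2 * nu * kR = (4 + 2 / F ^ 2) / nu := by
      rw [hkR]; field_simp; ring
    rw [e]; positivity
  have h9 : (9 : ℝ) < 2 * nu * (6 / nu + 2 * nu * kR) := by
    have e : 2 * nu * (6 / nu + 2 * nu * kR) = 8 + 4 / F ^ 2 := by
      rw [hkR]; field_simp; ring
    have h1 : (1 : ℝ) < 4 / F ^ 2 := by
      rw [lt_div_iff₀ (by positivity)]; nlinarith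
    rw [e]; linarith
  have hs1 : 1 < s := by
    rw [hcs]
    rw [lt_div_iff₀ (by positivity)]
    nlinarith
  have hdetA : 0 < s ^ 2 - 2 * s / nu - kR := by
    have e : s ^ 2 - 2 * s / nu - kR
        = (F ^ 2 * nu ^ 4 - (nu + 1) ^ 2) / (F ^ 2 * nu ^ 2 * (nu + 1) ^ 2) := by
      rw [hcs, hkR]
      have h4 : nu ^ 2 + nu ≠ 0 := by positivity
      field_simp
      ring
    rw [e]
    apply div_pos
    · nlinarith [mul_pos (show (0:ℝ) < F * nu ^ 2 - (nu + 1) by linarith)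
        (show (0:ℝ) < F * nu ^ 2 + (nu + 1) by positivity)]
    · positivity
  -- the B coefficients
  have hB22 : (-3 + 2 * nu * (2 / nu - s)) < 0 := by
    have e : -3 + 2 * nu * (2 / nu - s) = 1 - 2 * nu * s := by
      field_simp; ring
    rw [e]; nlinarith
  have hid : (-((6 / nu + 2 * nu * kR) * s) - 3 * kR) * (-3 + 2 * nu * (2 / nu - s))
      - (3 * s + 2 * nu * kR) ^ 2
      = (2 * nu * (6 / nu + 2 * nu * kR) - 9) * (s ^ 2 - 2 * s / nu - kR) := by
    field_simp
    ring
  have hdetB : (3 * s + 2 * nu * kR) ^ 2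
      < (-((6 / nu + 2 * nu * kR) * s) - 3 * kR) * (-3 + 2 * nu * (2 / nu - s)) := by
    linarith [hid, mul_pos (show (0:ℝ) < 2 * nu * (6 / nu + 2 * nu * kR) - 9 by linarith) hdetA]
  have hB11 : (-((6 / nu + 2 * nu * kR) * s) - 3 * kR) < 0 := by
    nlinarith [sq_nonneg (3 * s + 2 * nu * kR)]
  -- apply the quadratic-form lemma
  have hXpos : 0 < (6 / nu + 2 * nu * kR) * x1 - 6 * tt + 2 * nu * x2 := by
    have h := negdef_val (-(6 / nu + 2 * nu * kR)) 3 (-(2 * nu)) x1 x2 tt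
      (by linarith) (by nlinarith) hx1n hx2n hx htt
    nlinarith [h]
  have hYneg : (-((6 / nu + 2 * nu * kR) * s) - 3 * kR) * x1 + 2 * (3 * s + 2 * nu * kR) * tt
      + (-3 + 2 * nu * (2 / nu - s)) * x2 < 0 :=
    negdef_val _ _ _ x1 x2 tt hB11 hdetB hx1n hx2n hx htt
  -- conclude
  by_contra hg
  push_neg at hg
  have h1 : 0 ≤ gam.re * ((-((6 / nu + 2 * nu * kR) * s) - 3 * kR) * x1
      + 2 * (3 * s + 2 * nu * kR) * tt + (-3 + 2 * nu * (2 / nu - s)) * x2) :=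
    by nlinarith [mul_nonneg (neg_nonneg.2 hg) (neg_nonneg.2 (le_of_lt hYneg))]
  nlinarith [mul_pos hlam hXpos]
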